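/- For independent X₁ ~ Beta(α₁, β₁) and X₂ ~ Beta(α₂, β₂) with positive integer parameters, P(X₁ > X₂) can be written as the double-factorial expression in Eq. (34): P(X₁ > X₂) = [(α₁+β₁−1)!(α₂+β₂−1)! / ((α₁−1)!(β₁−1)!(α₁+β₁+α₂+β₂−2)!)] · ∑_{j=α₂}^{α₂+β₂−1} (j+α₁−1)!(β₁+α₂+β₂−j−2)! / (j!(α₂+β₂−1−j)!). -/

import Mathlib

open MeasureTheory Real Finset

/-- The Beta function `B(a,b) = Γ(a)Γ(b)/Γ(a+b)` at natural-number arguments. -/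
noncomputable def betaFun (a b : ℕ) : ℝ :=
  Real.Gamma a * Real.Gamma b / Real.Gamma (a + b)

/-- Density of a Beta(a, b) random variable with positive integer parameters. -/
noncomputable def betaDensity (a b : ℕ) (x : ℝ) : ℝ :=
  x ^ (a - 1) * (1 - x) ^ (b - 1) / betaFun a b

lemma betaFun_succ (a b : ℕ) :
    betaFun (a+1) (b+1) = (a.factorial : ℝ) * b.factorial / (a+b+1).factorial := by
  unfold betaFun
  have h1 : ((a+1 : ℕ) : ℝ) = (a : ℝ) + 1 := by push_cast; ring
  have h2 : ((b+1 : ℕ) : ℝ) = (b : ℝ) + 1 := by push_cast; ring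
  have h3 : ((a+1 : ℕ) : ℝ) + ((b+1 : ℕ) : ℝ) = ((a+b+1 : ℕ) : ℝ) + 1 := by push_cast; ring
  rw [h3, h1, h2, Real.Gamma_nat_eq_factorial, Real.Gamma_nat_eq_factorial,
    Real.Gamma_nat_eq_factorial]

lemma betaDensity_succ (a b : ℕ) (x : ℝ) :
    betaDensity (a+1) (b+1) x
      = ((a+b+1).factorial / (a.factorial * b.factorial) : ℝ) * (x ^ a * (1-x) ^ b) := by
  unfold betaDensity
  rw [betaFun_succ]
  simp only [Nat.add_sub_cancel]
  rw [div_div_eq_mul_div]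
  ring

/-- Binomial tail sum: the CDF of Beta(a,b). -/
noncomputable def bsum (a b : ℕ) (x : ℝ) : ℝ :=
  ∑ j ∈ Finset.Icc a (a + b - 1), ((a+b-1).choose j : ℝ) * (x ^ j * (1 - x) ^ (a + b - 1 - j))

lemma hasDerivAt_bsum (a b : ℕ) (x : ℝ) :
    HasDerivAt (bsum (a+1) (b+1)) (betaDensity (a+1) (b+1) x) x := by
  set n : ℕ := a + b + 1 with hn
  have hIcc : (a+1) + (b+1) - 1 = n := by omega
  -- derivative of each term
  have hterm : ∀ j ∈ Finset.Icc (a+1) n,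
      HasDerivAt (fun y : ℝ => (n.choose j : ℝ) * (y ^ j * (1 - y) ^ (n - j)))
        ((n.choose j : ℝ) * ((j * x ^ (j-1)) * (1 - x) ^ (n - j)
          + x ^ j * (((n - j : ℕ) * (1 - x) ^ (n - j - 1)) * (-1)))) x := by
    intro j hj
    exact (((hasDerivAt_pow j x).mul
      (((hasDerivAt_pow (n - j) (1 - x)).comp x ((hasDerivAt_id x).const_sub 1))))).const_mul _
  have hsum := HasDerivAt.fun_sum hterm
  -- now identify the sum of derivatives with betaDensity
  have key : ∑ j ∈ Finset.Icc (a+1) n,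
      ((n.choose j : ℝ) * ((j * x ^ (j-1)) * (1 - x) ^ (n - j)
        + x ^ j * (((n - j : ℕ) * (1 - x) ^ (n - j - 1)) * (-1))))
      = betaDensity (a+1) (b+1) x := by
    have hre : ∀ j ∈ Finset.Icc (a+1) n,
        ((n.choose j : ℝ) * ((j * x ^ (j-1)) * (1 - x) ^ (n - j)
          + x ^ j * (((n - j : ℕ) * (1 - x) ^ (n - j - 1)) * (-1))))
        = (fun k => ((n.choose k : ℝ) * (n - k : ℕ)) * (x ^ k * (1-x) ^ (n - k - 1))) (j - 1)
          - (fun k => ((n.choose k : ℝ) * (n - k : ℕ)) * (x ^ k * (1-x) ^ (n - k - 1))) j := by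
      intro j hj
      simp only [Finset.mem_Icc] at hj
      obtain ⟨hj1, hj2⟩ := hj
      have hjj : j - 1 + 1 = j := by omega
      have hc : (n.choose (j-1) : ℝ) * ((n - (j-1) : ℕ) : ℝ) = (n.choose j : ℝ) * j := by
        have := Nat.choose_succ_right_eq n (j - 1)
        rw [hjj] at this
        exact_mod_cast this.symm
      have he : n - (j - 1) - 1 = n - j := by omega
      beta_reduce
      rw [he, hc]
      ring
    rw [Finset.sum_congr rfl hre]
    have : Finset.Icc (a+1) n = Finset.Ico (a+1) (n+1) := by
      rw [Finset.Ico_add_one_right_eq_Icc]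
    rw [this, Finset.sum_Ico_eq_sum_range]
    have hcard : n + 1 - (a + 1) = b + 1 := by omega
    rw [hcard]
    have hre2 : ∀ i ∈ Finset.range (b+1),
        (fun k => ((n.choose k : ℝ) * (n - k : ℕ)) * (x ^ k * (1-x) ^ (n - k - 1))) ((a+1) + i - 1)
          - (fun k => ((n.choose k : ℝ) * (n - k : ℕ)) * (x ^ k * (1-x) ^ (n - k - 1))) ((a+1) + i)
        = (fun k => ((n.choose (a+k) : ℝ) * (n - (a+k) : ℕ)) * (x ^ (a+k) * (1-x) ^ (n - (a+k) - 1))) i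
          - (fun k => ((n.choose (a+k) : ℝ) * (n - (a+k) : ℕ)) * (x ^ (a+k) * (1-x) ^ (n - (a+k) - 1))) (i+1) := by
      intro i _
      have h1 : (a+1) + i - 1 = a + i := by omega
      have h2 : (a+1) + i = a + (i + 1) := by omega
      rw [h1, h2]
    rw [Finset.sum_congr rfl hre2, Finset.sum_range_sub']
    simp only [add_zero]
    have h0 : n - a = b + 1 := by omega
    have h2 : n - (a + (b+1)) = 0 := by omega
    rw [h0, h2]
    simp only [Nat.cast_zero, mul_zero, zero_mul, sub_zero, Nat.add_sub_cancel]
    rw [betaDensity_succ]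
    have hc2 : (n.choose a : ℝ) * ((b+1 : ℕ) : ℝ) = (n.factorial / (a.factorial * b.factorial) : ℝ) := by
      have h3 : n - a = b + 1 := by omega
      rw [Nat.cast_choose ℝ (by omega : a ≤ n), h3]
      have h4 : (((b+1).factorial : ℕ) : ℝ) = ((b:ℝ)+1) * b.factorial := by
        rw [Nat.factorial_succ]; push_cast; ring
      rw [h4]
      have hb : ((b:ℝ)+1) ≠ 0 := by positivity
      have hfa : ((a.factorial:ℕ):ℝ) ≠ 0 := by positivity
      have hfb : ((b.factorial:ℕ):ℝ) ≠ 0 := by positivity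
      push_cast
      field_simp
    rw [hc2, hn]
  rw [← key]
  have : bsum (a+1) (b+1) = fun y => ∑ j ∈ Finset.Icc (a+1) n,
      ((n.choose j : ℝ) * (y ^ j * (1 - y) ^ (n - j))) := by
    funext y
    unfold bsum
    rw [hIcc]
  rw [this]
  exact hsum

lemma continuous_betaDensity (a b : ℕ) : Continuous (betaDensity (a+1) (b+1)) := by
  unfold betaDensity
  apply Continuous.div_const
  exact (continuous_pow _).mul ((continuous_const.sub continuous_id).pow _)

lemma bsum_zero (a b : ℕ) : bsum (a+1) (b+1) 0 = 0 := by
  unfold bsum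
  apply Finset.sum_eq_zero
  intro j hj
  simp only [Finset.mem_Icc] at hj
  rw [zero_pow (by omega : j ≠ 0)]
  ring

lemma bsum_one (a b : ℕ) : bsum (a+1) (b+1) 1 = 1 := by
  unfold bsum
  have hIcc : (a+1) + (b+1) - 1 = a + b + 1 := by omega
  rw [hIcc]
  rw [Finset.sum_eq_single (a+b+1)]
  · simp
  · intro j hj hne
    simp only [Finset.mem_Icc] at hj
    rw [sub_self, zero_pow (by omega : a + b + 1 - j ≠ 0)]
    ring
  · intro h
    exact absurd (Finset.mem_Icc.mpr ⟨by omega, le_refl _⟩) h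

lemma integral_betaDensity_eq_bsum (a b : ℕ) (x : ℝ) :
    ∫ y in (0:ℝ)..x, betaDensity (a+1) (b+1) y = bsum (a+1) (b+1) x := by
  have := intervalIntegral.integral_eq_sub_of_hasDerivAt
    (f := bsum (a+1) (b+1)) (f' := betaDensity (a+1) (b+1)) (a := 0) (b := x)
    (fun y _ => hasDerivAt_bsum a b y)
    ((continuous_betaDensity a b).intervalIntegrable 0 x)
  rw [this, bsum_zero, sub_zero]

lemma integral_pow_mul_one_sub_pow (p q : ℕ) :
    ∫ x in (0:ℝ)..1, x ^ p * (1-x) ^ q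
      = (p.factorial : ℝ) * q.factorial / (p+q+1).factorial := by
  have h := integral_betaDensity_eq_bsum p q 1
  rw [bsum_one] at h
  have hd : ∀ x : ℝ, betaDensity (p+1) (q+1) x
      = ((p+q+1).factorial / (p.factorial * q.factorial) : ℝ) * (x ^ p * (1-x) ^ q) :=
    betaDensity_succ p q
  rw [intervalIntegral.integral_congr (fun x _ => hd x)] at h
  rw [intervalIntegral.integral_const_mul] at h
  have hne : ((p+q+1).factorial / (p.factorial * q.factorial) : ℝ) ≠ 0 := by positivity
  field_simp at h ⊢
  linarith [h]

lemma continuous_term (p q : ℕ) (c : ℝ) : Continuous (fun x : ℝ => c * (x ^ p * (1-x) ^ q)) :=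
  continuous_const.mul ((continuous_pow _).mul ((continuous_const.sub continuous_id).pow _))

/-- Closed form (Eq. (34) of the paper) for `P(X₁ > X₂)` for independent Beta
random variables with positive integer parameters. -/
theorem prob_beta_gt_beta_factorial_form (α₁ β₁ α₂ β₂ : ℕ)
    (hα₁ : 0 < α₁) (hβ₁ : 0 < β₁) (hα₂ : 0 < α₂) (hβ₂ : 0 < β₂) :
    (∫ x in (0:ℝ)..1, betaDensity α₁ β₁ x * ∫ y in (0:ℝ)..x, betaDensity α₂ β₂ y)
      = ((Nat.factorial (α₁ + β₁ - 1) : ℝ) * (Nat.factorial (α₂ + β₂ - 1) : ℝ) /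
          ((Nat.factorial (α₁ - 1) : ℝ) * (Nat.factorial (β₁ - 1) : ℝ) *
            (Nat.factorial (α₁ + β₁ + α₂ + β₂ - 2) : ℝ))) *
        ∑ j ∈ Finset.Icc α₂ (α₂ + β₂ - 1),
          (Nat.factorial (j + α₁ - 1) : ℝ) *
              (Nat.factorial (β₁ + α₂ + β₂ - j - 2) : ℝ) /
            ((Nat.factorial j : ℝ) * (Nat.factorial (α₂ + β₂ - 1 - j) : ℝ)) := by
  obtain ⟨a, rfl⟩ : ∃ a, α₁ = a + 1 := ⟨α₁ - 1, by omega⟩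
  obtain ⟨b, rfl⟩ : ∃ b, β₁ = b + 1 := ⟨β₁ - 1, by omega⟩
  obtain ⟨c, rfl⟩ : ∃ c, α₂ = c + 1 := ⟨α₂ - 1, by omega⟩
  obtain ⟨d, rfl⟩ : ∃ d, β₂ = d + 1 := ⟨β₂ - 1, by omega⟩
  clear hα₁ hβ₁ hα₂ hβ₂
  set n : ℕ := c + d + 1 with hn
  set F : ℝ := ((a+b+1).factorial / (a.factorial * b.factorial) : ℝ) with hF
  -- rewrite the integrand as a finite sum of polynomial terms
  have hintegrand : ∀ x : ℝ,
      betaDensity (a+1) (b+1) x * ∫ y in (0:ℝ)..x, betaDensity (c+1) (d+1) y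
      = ∑ j ∈ Finset.Icc (c+1) n,
          (F * (n.choose j : ℝ)) * (x ^ (a+j) * (1-x) ^ (b+(n-j))) := by
    intro x
    rw [integral_betaDensity_eq_bsum, betaDensity_succ]
    unfold bsum
    have hIcc : (c+1) + (d+1) - 1 = n := by omega
    rw [hIcc, Finset.mul_sum]
    refine Finset.sum_congr rfl (fun j hj => ?_)
    rw [pow_add, pow_add]
    ring
  rw [intervalIntegral.integral_congr (fun x _ => hintegrand x)]
  rw [intervalIntegral.integral_finset_sum (fun j _ =>
    (continuous_term (a+j) (b+(n-j)) _).intervalIntegrable 0 1)]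
  have hIcc2 : (c+1) + (d+1) - 1 = n := by omega
  rw [hIcc2, Finset.mul_sum]
  refine Finset.sum_congr rfl (fun j hj => ?_)
  simp only [Finset.mem_Icc] at hj
  obtain ⟨hj1, hj2⟩ := hj
  rw [intervalIntegral.integral_const_mul, integral_pow_mul_one_sub_pow]
  -- identify all natural subtraction expressions
  have e1 : (a+1) + (b+1) - 1 = a + b + 1 := by omega
  have e2 : (a+1) + 1 - 1 = a + 1 := by omega
  have e3 : a + 1 - 1 = a := by omega
  have e4 : b + 1 - 1 = b := by omega
  have e5 : (a+1) + (b+1) + (c+1) + (d+1) - 2 = a + b + n + 1 := by omega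
  have e6 : j + (a+1) - 1 = a + j := by omega
  have e7 : (b+1) + (c+1) + (d+1) - j - 2 = b + (n - j) := by omega
  have e8 : n - j = n - j := rfl
  have e9 : (a+j) + (b+(n-j)) + 1 = a + b + n + 1 := by omega
  rw [e1, e3, e4, e5, e6, e7, e9]
  rw [Nat.cast_choose ℝ hj2]
  have h1 : ((a.factorial:ℕ):ℝ) ≠ 0 := by positivity
  have h2 : ((b.factorial:ℕ):ℝ) ≠ 0 := by positivity
  have h3 : ((j.factorial:ℕ):ℝ) ≠ 0 := by positivity
  have h4 : (((n-j).factorial:ℕ):ℝ) ≠ 0 := by positivity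
  have h5 : (((a+b+n+1).factorial:ℕ):ℝ) ≠ 0 := by positivity
  have h6 : ((n.factorial:ℕ):ℝ) ≠ 0 := by positivity
  rw [hF]
  field_simp
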